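/- The linear span of the set of functions { y ↦ 1_{(−∞, t]}(y)·Σ(e^{(y−t)D} w) : t ∈ ℝ, w ∈ W } is dense in L²(ℝ; W); that is, the explicit dilation is minimal. -/

import Mathlib

open MeasureTheory RealInnerProductSpace

section Auxiliary

open NormedSpace Set Filter Metric
open scoped ENNReal

lemma integrableOn_exp_mul_sub {c : ℝ} (hc : 0 < c) (t : ℝ) :
    IntegrableOn (fun y => Real.exp (c * (y - t))) (Iic t) volume := by
  have hcont : Continuous fun y : ℝ => Real.exp (c * (y - t)) := by continuity
  refine integrableOn_Iic_of_intervalIntegral_norm_bounded (1 / c) t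
    (fun a => hcont.integrableOn_Ioc) tendsto_id (Eventually.of_forall fun a => ?_)
  have hderiv : ∀ y ∈ uIcc a t,
      HasDerivAt (fun y => Real.exp (c * (y - t)) / c) (Real.exp (c * (y - t))) y := by
    intro y _
    have h1 : HasDerivAt (fun y : ℝ => c * (y - t)) c y := by
      simpa using ((hasDerivAt_id y).sub_const t).const_mul c
    have h2 := (Real.hasDerivAt_exp (c * (y - t))).comp y h1
    have h3 := h2.div_const c
    have heq : Real.exp (c * (y - t)) * c / c = Real.exp (c * (y - t)) := by
      field_simp
    simpa [heq] using h3
  have heval : (∫ y in a..t, ‖Real.exp (c * (y - t))‖)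
      = Real.exp (c * (t - t)) / c - Real.exp (c * (a - t)) / c := by
    simp_rw [Real.norm_eq_abs, abs_of_pos (Real.exp_pos _)]
    exact intervalIntegral.integral_eq_sub_of_hasDerivAt hderiv (hcont.intervalIntegrable a t)
  show (∫ y in a..t, ‖Real.exp (c * (y - t))‖) ≤ 1 / c
  rw [heval]
  simp only [sub_self, mul_zero, Real.exp_zero]
  have : 0 < Real.exp (c * (a - t)) / c := by positivity
  linarith

lemma memL2_exp_restrict {c : ℝ} (hc : 0 < c) (t : ℝ) :
    MemLp (fun y => Real.exp (c * (y - t))) 2 (volume.restrict (Iic t)) := by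
  have hcont : Continuous fun y : ℝ => Real.exp (c * (y - t)) := by continuity
  rw [memLp_two_iff_integrable_sq hcont.aestronglyMeasurable]
  have h2 := integrableOn_exp_mul_sub (by linarith : (0:ℝ) < 2 * c) t
  refine h2.congr_fun (fun y _ => ?_) measurableSet_Iic
  rw [sq, ← Real.exp_add]; ring_nf

lemma one_div_one_eq_ennreal : (1 : ℝ≥0∞) / 1 = 1 / 2 + 1 / 2 := by
  rw [ENNReal.add_halves, one_div_one]

variable {W : Type*} [NormedAddCommGroup W] [InnerProductSpace ℝ W]

lemma integrableOn_decay {g : ℝ → W} {f2 : ℝ → ℝ} {c t : ℝ} (hc : 0 < c)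
    (hf2 : MemLp f2 2 (volume : Measure ℝ))
    (hg : AEStronglyMeasurable g (volume.restrict (Iic t)))
    (hbound : ∀ y ∈ Iic t, ‖g y‖ ≤ Real.exp (c * (y - t)) * f2 y) :
    IntegrableOn g (Iic t) volume := by
  have hφ := memL2_exp_restrict hc t
  have hprod : MemLp ((fun y => Real.exp (c * (y - t))) • f2) 1 (volume.restrict (Iic t)) :=
    (hf2.restrict _).smul hφ
  have hint : Integrable ((fun y => Real.exp (c * (y - t))) • f2) (volume.restrict (Iic t)) :=
    memLp_one_iff_integrable.mp hprod
  refine hint.mono' hg ?_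
  rw [ae_restrict_iff' measurableSet_Iic]
  exact ae_of_all _ fun y hy => by simpa using hbound y hy

variable [FiniteDimensional ℝ W]

lemma exists_delta (D : W →L[ℝ] W)
    (hpos : ∀ w : W, w ≠ 0 → 0 < ⟪(D + ContinuousLinearMap.adjoint D) w, w⟫) :
    ∃ δ : ℝ, 0 < δ ∧ ∀ u : W, δ * ‖u‖ ^ 2 ≤ ⟪(D + ContinuousLinearMap.adjoint D) u, u⟫ := by
  set T := D + ContinuousLinearMap.adjoint D with hT
  rcases subsingleton_or_nontrivial W with hW | hW
  · exact ⟨1, one_pos, fun u => by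
      simp [Subsingleton.elim u 0]⟩
  · have hsc : IsCompact (sphere (0:W) 1) := isCompact_sphere 0 1
    have hsn : (sphere (0:W) 1).Nonempty := NormedSpace.sphere_nonempty.mpr zero_le_one
    have hcont : Continuous fun w : W => ⟪T w, w⟫ :=
      (T.continuous.inner continuous_id)
    obtain ⟨w₀, hw₀s, hw₀min'⟩ := hsc.exists_isMinOn hsn hcont.continuousOn
    have hw₀min : ∀ v ∈ sphere (0:W) 1, ⟪T w₀, w₀⟫ ≤ ⟪T v, v⟫ := fun v hv => hw₀min' hv
    have hw₀ : w₀ ≠ 0 := by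
      intro h
      have := mem_sphere_zero_iff_norm.mp hw₀s
      simp [h] at this
    refine ⟨⟪T w₀, w₀⟫, hpos w₀ hw₀, fun u => ?_⟩
    rcases eq_or_ne u 0 with rfl | hu
    · simp
    · have hnu : (0:ℝ) < ‖u‖ := norm_pos_iff.mpr hu
      have hv : ‖u‖⁻¹ • u ∈ sphere (0:W) 1 := by
        simp [norm_smul, abs_of_pos (inv_pos.mpr hnu), inv_mul_cancel₀ hnu.ne']
      have h1 := hw₀min _ hv
      have h2 : ⟪T (‖u‖⁻¹ • u), ‖u‖⁻¹ • u⟫ = ‖u‖⁻¹ * (‖u‖⁻¹ * ⟪T u, u⟫) := by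
        rw [ContinuousLinearMap.map_smul, real_inner_smul_left, real_inner_smul_right]
      rw [h2] at h1
      have h3 : ⟪T w₀, w₀⟫ * ‖u‖ ^ 2 ≤ ‖u‖⁻¹ * (‖u‖⁻¹ * ⟪T u, u⟫) * ‖u‖ ^ 2 := by
        nlinarith [sq_nonneg ‖u‖]
      calc ⟪T w₀, w₀⟫ * ‖u‖ ^ 2 ≤ ‖u‖⁻¹ * (‖u‖⁻¹ * ⟪T u, u⟫) * ‖u‖ ^ 2 := h3
        _ = ‖u‖⁻¹ * ‖u‖⁻¹ * ‖u‖ ^ 2 * ⟪T u, u⟫ := by ring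
        _ = ⟪T u, u⟫ := by
            rw [sq]
            field_simp

lemma exp_decay (B : W →L[ℝ] W) {δ : ℝ}
    (hq : ∀ u : W, δ * ‖u‖ ^ 2 ≤ ⟪(B + ContinuousLinearMap.adjoint B) u, u⟫)
    (x : W) {s : ℝ} (hs : s ≤ 0) :
    ‖exp (s • B) x‖ ≤ Real.exp (δ / 2 * s) * ‖x‖ := by
  set u : ℝ → W := fun r => exp (r • B) x with hu
  have hder : ∀ r : ℝ, HasDerivAt u (B (u r)) r := by
    intro r
    have h := (hasDerivAt_exp_smul_const' (𝕂 := ℝ) B r).clm_apply (hasDerivAt_const r x)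
    simpa using h
  set ψ : ℝ → ℝ := fun r => Real.exp (-(δ * r)) * ⟪u r, u r⟫ with hψ
  have hψder : ∀ r : ℝ, HasDerivAt ψ
      (Real.exp (-(δ * r)) * (-δ) * ⟪u r, u r⟫
        + Real.exp (-(δ * r)) * (⟪u r, B (u r)⟫ + ⟪B (u r), u r⟫)) r := by
    intro r
    have h1 : HasDerivAt (fun r : ℝ => Real.exp (-(δ * r))) (Real.exp (-(δ * r)) * (-δ)) r := by
      have := (Real.hasDerivAt_exp (-(δ * r))).comp r
        (((hasDerivAt_id r).const_mul δ).neg)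
      simpa [mul_comm, Function.comp_def, Pi.neg_def] using this
    have h2 : HasDerivAt (fun r => (⟪u r, u r⟫ : ℝ)) (⟪u r, B (u r)⟫ + ⟪B (u r), u r⟫) r :=
      (hder r).inner ℝ (hder r)
    exact h1.mul h2
  have hmono : Monotone ψ := by
    apply monotone_of_deriv_nonneg
    · exact fun r => (hψder r).differentiableAt
    · intro r
      rw [(hψder r).deriv]
      have he : ⟪(B + ContinuousLinearMap.adjoint B) (u r), u r⟫
          = ⟪B (u r), u r⟫ + ⟪u r, B (u r)⟫ := by
        rw [ContinuousLinearMap.add_apply, inner_add_left,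
          ContinuousLinearMap.adjoint_inner_left]
      have hb : δ * ‖u r‖ ^ 2 ≤ ⟪u r, B (u r)⟫ + ⟪B (u r), u r⟫ := by
        have h0 := hq (u r); rw [he] at h0; linarith
      have hn : (⟪u r, u r⟫ : ℝ) = ‖u r‖ ^ 2 := real_inner_self_eq_norm_sq _
      have hexp : (0:ℝ) < Real.exp (-(δ * r)) := Real.exp_pos _
      rw [hn]
      have hfac : Real.exp (-(δ * r)) * (-δ) * ‖u r‖ ^ 2
          + Real.exp (-(δ * r)) * (⟪u r, B (u r)⟫ + ⟪B (u r), u r⟫)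
          = Real.exp (-(δ * r)) * ((⟪u r, B (u r)⟫ + ⟪B (u r), u r⟫) - δ * ‖u r‖ ^ 2) := by
        ring
      rw [hfac]
      exact mul_nonneg hexp.le (by linarith)
  have hψs := hmono hs
  have hu0 : u 0 = x := by simp [hu]
  have hψ0 : ψ 0 = ‖x‖ ^ 2 := by simp [hψ, hu0, real_inner_self_eq_norm_sq]
  have key : ‖u s‖ ^ 2 ≤ Real.exp (δ * s) * ‖x‖ ^ 2 := by
    have : Real.exp (-(δ * s)) * ⟪u s, u s⟫ ≤ ‖x‖ ^ 2 := hψ0 ▸ hψs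
    have h' := mul_le_mul_of_nonneg_left this (Real.exp_pos (δ * s)).le
    rw [← mul_assoc, ← Real.exp_add] at h'
    simpa [real_inner_self_eq_norm_sq] using h'
  have hrhs : (0:ℝ) ≤ Real.exp (δ / 2 * s) * ‖x‖ := by positivity
  have hsq : ‖u s‖ ^ 2 ≤ (Real.exp (δ / 2 * s) * ‖x‖) ^ 2 := by
    have hes : Real.exp (δ / 2 * s) ^ 2 = Real.exp (δ * s) := by
      rw [sq, ← Real.exp_add]; ring_nf
    rw [mul_pow, hes]
    exact key
  calc ‖u s‖ = Real.sqrt (‖u s‖ ^ 2) := by rw [Real.sqrt_sq (norm_nonneg _)]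
    _ ≤ Real.sqrt ((Real.exp (δ / 2 * s) * ‖x‖) ^ 2) := Real.sqrt_le_sqrt hsq
    _ = Real.exp (δ / 2 * s) * ‖x‖ := Real.sqrt_sq hrhs

lemma adjoint_exp_smul (B : W →L[ℝ] W) (s : ℝ) :
    ContinuousLinearMap.adjoint (exp (s • B)) = exp (s • ContinuousLinearMap.adjoint B) := by
  rw [← ContinuousLinearMap.star_eq_adjoint, ← ContinuousLinearMap.star_eq_adjoint, star_exp,
    star_smul, star_trivial]

set_option synthInstance.maxHeartbeats 1000000 in
lemma exp_smul_apply_add (B : W →L[ℝ] W) (a b : ℝ) (z : W) :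
    exp (a • B) (exp (b • B) z) = exp ((a + b) • B) z := by
  letI : NormedAlgebra ℚ (W →L[ℝ] W) := .restrictScalars ℚ ℝ _
  rw [← ContinuousLinearMap.mul_apply,
    ← exp_add_of_commute (((Commute.refl B).smul_left a).smul_right b), add_smul]

lemma memL2_indicator (D : W →L[ℝ] W) {δ : ℝ} (hδ : 0 < δ)
    (hq : ∀ u : W, δ * ‖u‖ ^ 2 ≤ ⟪(D + ContinuousLinearMap.adjoint D) u, u⟫)
    (Sig : W →L[ℝ] W) (t : ℝ) (w : W) :
    MemLp (Set.indicator (Iic t) (fun y => Sig (exp ((y - t) • D) w))) 2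
      (volume : Measure ℝ) := by
  letI : NormedAlgebra ℚ (W →L[ℝ] W) := .restrictScalars ℚ ℝ _
  have hcont : Continuous fun y : ℝ => Sig (exp ((y - t) • D) w) := by
    refine Sig.continuous.comp ?_
    exact (ContinuousLinearMap.apply ℝ W w).continuous.comp
      (exp_continuous.comp ((continuous_id.sub continuous_const).smul continuous_const))
  have hmb : MemLp (Set.indicator (Iic t)
      (fun y => ‖Sig‖ * ‖w‖ * Real.exp (δ / 2 * (y - t)))) 2 (volume : Measure ℝ) := by
    rw [memLp_indicator_iff_restrict measurableSet_Iic]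
    exact (memL2_exp_restrict (by linarith) t).const_mul (‖Sig‖ * ‖w‖)
  refine MemLp.of_le hmb (hcont.aestronglyMeasurable.indicator measurableSet_Iic)
    (ae_of_all _ fun y => ?_)
  by_cases hy : y ∈ Iic t
  · rw [Set.indicator_of_mem hy, Set.indicator_of_mem hy]
    have h1 : ‖Sig (exp ((y - t) • D) w)‖ ≤ ‖Sig‖ * ‖exp ((y - t) • D) w‖ :=
      Sig.le_opNorm _
    have h2 : ‖exp ((y - t) • D) w‖ ≤ Real.exp (δ / 2 * (y - t)) * ‖w‖ :=
      exp_decay D hq w (by simpa using hy)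
    have h3 : ‖Sig‖ * ‖exp ((y - t) • D) w‖ ≤ ‖Sig‖ * (Real.exp (δ / 2 * (y - t)) * ‖w‖) :=
      mul_le_mul_of_nonneg_left h2 (norm_nonneg _)
    have h4 : (0:ℝ) ≤ ‖Sig‖ * ‖w‖ * Real.exp (δ / 2 * (y - t)) := by positivity
    rw [Real.norm_eq_abs, abs_of_nonneg h4]
    calc ‖Sig (exp ((y - t) • D) w)‖ ≤ ‖Sig‖ * ‖exp ((y - t) • D) w‖ := h1
      _ ≤ ‖Sig‖ * (Real.exp (δ / 2 * (y - t)) * ‖w‖) := h3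
      _ = ‖Sig‖ * ‖w‖ * Real.exp (δ / 2 * (y - t)) := by ring
  · rw [Set.indicator_of_notMem hy, Set.indicator_of_notMem hy]
    simp

end Auxiliary

theorem explicit_dilation_minimal
    {W : Type*} [NormedAddCommGroup W] [InnerProductSpace ℝ W] [FiniteDimensional ℝ W]
    (D : W →L[ℝ] W)
    (hpos : ∀ w : W, w ≠ 0 → 0 < ⟪(D + ContinuousLinearMap.adjoint D) w, w⟫)
    (Sig : W →L[ℝ] W)
    (hSigsa : ContinuousLinearMap.adjoint Sig = Sig)
    (hSigpos : ∀ w : W, 0 ≤ ⟪Sig w, w⟫)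
    (hSigsq : Sig ∘L Sig = D + ContinuousLinearMap.adjoint D) :
    Dense (↑(Submodule.span ℝ
      {g : Lp W 2 (volume : Measure ℝ) |
        ∃ (t : ℝ) (w : W), ∀ᵐ y : ℝ ∂volume,
          g y = Set.indicator (Set.Iic t)
            (fun y => Sig (NormedSpace.exp ((y - t) • D) w)) y}) :
      Set (Lp W 2 (volume : Measure ℝ))) := by
  classical
  obtain ⟨δ, hδ, hq⟩ := exists_delta D hpos
  set A := ContinuousLinearMap.adjoint D with hA
  have hqA : ∀ u : W, δ * ‖u‖ ^ 2 ≤ ⟪(A + ContinuousLinearMap.adjoint A) u, u⟫ := by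
    intro u
    rw [hA, ContinuousLinearMap.adjoint_adjoint, add_comm]
    exact hq u
  haveI : Fact ((1:ENNReal) ≤ 2) := fact_one_le_two_ennreal
  rw [Submodule.dense_iff_topologicalClosure_eq_top, Submodule.topologicalClosure_eq_top_iff,
    Submodule.eq_bot_iff]
  intro f hf
  have hfm : MemLp (⇑f) 2 (volume : Measure ℝ) := Lp.memLp f
  -- Step 1: inner products with the generators vanish
  have key0 : ∀ (t : ℝ) (w : W),
      (∫ y in Set.Iic t, ⟪Sig (NormedSpace.exp ((y - t) • D) w), f y⟫ ∂volume) = 0 := by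
    intro t w
    have hmem := memL2_indicator D hδ hq Sig t w
    set g : Lp W 2 (volume : Measure ℝ) := hmem.toLp _ with hg
    have hgS : ∃ (t' : ℝ) (w' : W), ∀ᵐ y : ℝ ∂volume,
        g y = Set.indicator (Set.Iic t')
          (fun y => Sig (NormedSpace.exp ((y - t') • D) w')) y :=
      ⟨t, w, hmem.coeFn_toLp⟩
    have h0 : (⟪g, f⟫ : ℝ) = 0 :=
      (Submodule.mem_orthogonal _ f).mp hf g (Submodule.subset_span hgS)
    rw [MeasureTheory.L2.inner_def] at h0
    have h1 : (∫ y : ℝ, ⟪g y, f y⟫ ∂volume)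
        = ∫ y : ℝ, Set.indicator (Set.Iic t)
            (fun y => ⟪Sig (NormedSpace.exp ((y - t) • D) w), f y⟫) y ∂volume := by
      refine integral_congr_ae ?_
      filter_upwards [hmem.coeFn_toLp] with y hy
      rw [hy]
      by_cases hmemy : y ∈ Set.Iic t
      · rw [Set.indicator_of_mem hmemy, Set.indicator_of_mem hmemy]
      · rw [Set.indicator_of_notMem hmemy, Set.indicator_of_notMem hmemy, inner_zero_left]
    rw [h1, integral_indicator measurableSet_Iic] at h0
    exact h0
  -- measurability
  have hSf : AEStronglyMeasurable (fun y : ℝ => Sig (f y)) volume :=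
    Sig.continuous.comp_aestronglyMeasurable (Lp.aestronglyMeasurable f)
  have hGm : ∀ t : ℝ, AEStronglyMeasurable
      (fun y : ℝ => NormedSpace.exp ((y - t) • A) (Sig (f y))) volume := by
    intro t
    letI : NormedAlgebra ℚ (W →L[ℝ] W) := .restrictScalars ℚ ℝ _
    have hc : Continuous fun y : ℝ => NormedSpace.exp ((y - t) • A) :=
      NormedSpace.exp_continuous.comp ((continuous_id.sub continuous_const).smul continuous_const)
    exact ContinuousLinearMap.aestronglyMeasurable_comp₂
      (ContinuousLinearMap.apply ℝ W).flip hc.aestronglyMeasurable hSf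
  -- integrability of the shifted integrand
  have hGt : ∀ t : ℝ, IntegrableOn
      (fun y : ℝ => NormedSpace.exp ((y - t) • A) (Sig (f y))) (Set.Iic t) volume := by
    intro t
    refine integrableOn_decay (by linarith : (0:ℝ) < δ / 2)
      (hfm.norm.const_mul ‖Sig‖) ((hGm t).restrict) (fun y hy => ?_)
    calc ‖NormedSpace.exp ((y - t) • A) (Sig (f y))‖
        ≤ Real.exp (δ / 2 * (y - t)) * ‖Sig (f y)‖ :=
          exp_decay A hqA (Sig (f y)) (by simpa using hy)
      _ ≤ Real.exp (δ / 2 * (y - t)) * (‖Sig‖ * ‖f y‖) :=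
          mul_le_mul_of_nonneg_left (Sig.le_opNorm _) (Real.exp_pos _).le
  -- the shifted integrals vanish
  have hVt : ∀ t : ℝ,
      (∫ y in Set.Iic t, NormedSpace.exp ((y - t) • A) (Sig (f y)) ∂volume) = 0 := by
    intro t
    refine integral_eq_zero_of_forall_integral_inner_eq_zero ℝ _ (hGt t) fun w => ?_
    rw [← key0 t w]
    refine integral_congr_ae (Filter.Eventually.of_forall fun y => ?_)
    calc (⟪w, NormedSpace.exp ((y - t) • A) (Sig (f y))⟫ : ℝ)
        = ⟪w, ContinuousLinearMap.adjoint (NormedSpace.exp ((y - t) • D)) (Sig (f y))⟫ := by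
          rw [adjoint_exp_smul]
      _ = ⟪NormedSpace.exp ((y - t) • D) w, Sig (f y)⟫ :=
          ContinuousLinearMap.adjoint_inner_right _ _ _
      _ = ⟪ContinuousLinearMap.adjoint Sig (NormedSpace.exp ((y - t) • D) w), f y⟫ :=
          (ContinuousLinearMap.adjoint_inner_left _ _ _).symm
      _ = ⟪Sig (NormedSpace.exp ((y - t) • D) w), f y⟫ := by rw [hSigsa]
  -- integrability of the unshifted integrand
  have hGIic : ∀ t : ℝ, IntegrableOn
      (fun y : ℝ => NormedSpace.exp (y • A) (Sig (f y))) (Set.Iic t) volume := by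
    intro t
    have h := (NormedSpace.exp (t • A)).integrable_comp (hGt t)
    refine h.congr (Filter.Eventually.of_forall fun y => ?_)
    show NormedSpace.exp (t • A) (NormedSpace.exp ((y - t) • A) (Sig (f y)))
      = NormedSpace.exp (y • A) (Sig (f y))
    rw [exp_smul_apply_add, show t + (y - t) = y by ring]
  -- the unshifted integrals vanish
  have hHt : ∀ t : ℝ,
      (∫ y in Set.Iic t, NormedSpace.exp (y • A) (Sig (f y)) ∂volume) = 0 := by
    intro t
    have h1 : (∫ y in Set.Iic t, NormedSpace.exp ((y - t) • A) (Sig (f y)) ∂volume)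
        = NormedSpace.exp ((-t) • A)
            (∫ y in Set.Iic t, NormedSpace.exp (y • A) (Sig (f y)) ∂volume) := by
      rw [← ContinuousLinearMap.integral_comp_comm _ (hGIic t)]
      refine integral_congr_ae (Filter.Eventually.of_forall fun y => ?_)
      show NormedSpace.exp ((y - t) • A) (Sig (f y))
        = NormedSpace.exp ((-t) • A) (NormedSpace.exp (y • A) (Sig (f y)))
      rw [exp_smul_apply_add, show -t + y = y - t by ring]
    have h2 := hVt t
    rw [h1] at h2
    have h3 := congrArg (fun z => NormedSpace.exp (t • A) z) h2
    simp only [map_zero] at h3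
    rwa [exp_smul_apply_add, add_neg_cancel, zero_smul, NormedSpace.exp_zero,
      ContinuousLinearMap.one_apply] at h3
  -- integrals over bounded intervals vanish
  have hIoc : ∀ a b : ℝ, a ≤ b →
      (∫ y in Set.Ioc a b, NormedSpace.exp (y • A) (Sig (f y)) ∂volume) = 0 := by
    intro a b hab
    have hd : Disjoint (Set.Iic a) (Set.Ioc a b) := by
      rw [Set.disjoint_left]
      intro y hy hy2
      exact absurd hy2.1 (not_lt.mpr hy)
    have hu : Set.Iic a ∪ Set.Ioc a b = Set.Iic b := Set.Iic_union_Ioc_eq_Iic hab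
    have h := setIntegral_union hd measurableSet_Ioc (hGIic a)
      ((hGIic b).mono_set Set.Ioc_subset_Iic_self)
    rw [hu, hHt b, hHt a] at h
    simpa using h.symm
  -- local integrability
  have hGloc : LocallyIntegrable (fun y : ℝ => NormedSpace.exp (y • A) (Sig (f y))) volume := by
    rw [locallyIntegrable_iff]
    intro k hk
    rcases k.eq_empty_or_nonempty with rfl | hne
    · simp [IntegrableOn]
    · obtain ⟨b, hb⟩ := hk.bddAbove
      exact (hGIic b).mono_set fun x hx => hb hx
  -- Lebesgue differentiation: the integrand vanishes a.e.
  have hae : ∀ᵐ y : ℝ ∂volume, NormedSpace.exp (y • A) (Sig (f y)) = 0 := by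
    filter_upwards [IsUnifLocDoublingMeasure.ae_tendsto_average (volume : Measure ℝ) hGloc 1]
      with x hx
    have hev : ∀ᶠ r : ℝ in nhdsWithin 0 (Set.Ioi 0),
        x ∈ Metric.closedBall ((fun _ : ℝ => x) r) (1 * (id r)) := by
      filter_upwards [eventually_mem_nhdsWithin] with r hr
      have : (0:ℝ) < r := hr
      exact Metric.mem_closedBall_self (by simpa using this.le)
    have h1 := hx (fun _ : ℝ => x) id Filter.tendsto_id hev
    simp only [id_eq] at h1
    have h0 : (fun r : ℝ => ⨍ y in Metric.closedBall x r,
        NormedSpace.exp (y • A) (Sig (f y)) ∂volume)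
        =ᶠ[nhdsWithin 0 (Set.Ioi 0)] fun _ => 0 := by
      filter_upwards [eventually_mem_nhdsWithin] with r hr
      have hr0 : (0:ℝ) < r := hr
      rw [setAverage_eq, Real.closedBall_eq_Icc, integral_Icc_eq_integral_Ioc,
        hIoc (x - r) (x + r) (by linarith), smul_zero]
    exact tendsto_nhds_unique h1 ((Filter.tendsto_congr' h0).mpr tendsto_const_nhds)
  -- conclude f = 0
  have hf0 : ∀ᵐ y : ℝ ∂volume, f y = 0 := by
    filter_upwards [hae] with y hy
    have h1 : Sig (f y) = 0 := by
      have h := congrArg (fun z => NormedSpace.exp ((-y) • A) z) hy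
      simp only [map_zero] at h
      rwa [exp_smul_apply_add, neg_add_cancel, zero_smul, NormedSpace.exp_zero,
        ContinuousLinearMap.one_apply] at h
    by_contra hne
    have h2 := hpos (f y) hne
    rw [← hSigsq, ContinuousLinearMap.comp_apply, h1, map_zero] at h2
    simp at h2
  exact Lp.eq_zero_iff_ae_eq_zero.mpr hf0
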